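/- Let W be convex with linear growth and let u ∈ W^{1,1}(𝕋), ξ : 𝕋 → [−W^∞, W^∞] measurable with weak derivative ξ_x ∈ L²(𝕋), such that ∫_𝕋 W(w_x) dx − ∫_𝕋 W(u_x) dx ≥ ∫_𝕋 ξ(w_x − u_x) dx for all w ∈ W^{1,1}(𝕋). Then −ξ_x ∈ ∂Ē(u), where Ē(w) = ∫_𝕋 W(w_x) dx + W^∞ |D^s w|(𝕋) is the relaxed energy on BV(𝕋); i.e., Ē(w) − Ē(u) ≥ −∫_𝕋 ξ_x (w − u) dx for all w ∈ BV(𝕋). -/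

import Mathlib

open MeasureTheory Filter Topology

section Helpers
open Set

theorem slope_tendsto_atTop (W : ℝ → ℝ) (Winf : ℝ)
    (hplus : Tendsto (fun t : ℝ => W t / t) atTop (𝓝 Winf)) (a : ℝ) :
    Tendsto (fun t : ℝ => (W t - W a) / (t - a)) atTop (𝓝 Winf) := by
  have ha : Tendsto (fun t : ℝ => t - a) atTop atTop :=
    tendsto_atTop_add_const_right _ _ tendsto_id
  have h0 : Tendsto (fun t : ℝ => W a / (t - a)) atTop (𝓝 0) :=
    Tendsto.div_atTop tendsto_const_nhds ha
  have h1 : Tendsto (fun t : ℝ => a / (t - a)) atTop (𝓝 0) :=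
    Tendsto.div_atTop tendsto_const_nhds ha
  have h2 : Tendsto (fun t : ℝ => W t / t * (1 + a / (t - a)) - W a / (t - a)) atTop
      (𝓝 (Winf * (1 + 0) - 0)) :=
    Tendsto.sub (Tendsto.mul hplus (Tendsto.const_add _ h1)) h0
  simp only [add_zero, mul_one, sub_zero] at h2
  refine h2.congr' ?_
  filter_upwards [eventually_ge_atTop (max 1 (a+1))] with t ht
  have ht1 : (1:ℝ) ≤ t := le_trans (le_max_left _ _) ht
  have ht2 : a + 1 ≤ t := le_trans (le_max_right _ _) ht
  have htne : t ≠ 0 := by linarith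
  have htane : t - a ≠ 0 := by intro h; nlinarith
  field_simp
  ring

theorem lipschitz_of_recession (W : ℝ → ℝ) (hW : ConvexOn ℝ Set.univ W) (Winf : ℝ)
    (hplus : Tendsto (fun t : ℝ => W t / t) atTop (𝓝 Winf))
    (hminus : Tendsto (fun t : ℝ => W (-t) / t) atTop (𝓝 Winf)) :
    ∀ a b : ℝ, |W b - W a| ≤ Winf * |b - a| := by
  have key : ∀ a b : ℝ, a < b → W b - W a ≤ Winf * (b - a) := by
    intro a b hab
    have hub : (W b - W a) / (b - a) ≤ Winf := by
      refine ge_of_tendsto (slope_tendsto_atTop W Winf hplus a) ?_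
      filter_upwards [eventually_ge_atTop (b + 1)] with t ht
      exact hW.secant_mono (mem_univ a) (mem_univ b) (mem_univ t)
        (by intro h; linarith) (by intro h; linarith) (by linarith)
    have hba : 0 < b - a := by linarith
    calc W b - W a = (W b - W a) / (b - a) * (b - a) := by field_simp
    _ ≤ Winf * (b - a) := by nlinarith
  have key2 : ∀ a b : ℝ, a < b → W a - W b ≤ Winf * (b - a) := by
    intro a b hab
    have hlb : -Winf ≤ (W a - W b) / (a - b) := by
      have hten : Tendsto (fun t : ℝ => (W (-t) - W b) / (-t - b)) atTop (𝓝 (-Winf)) := by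
        have ha : Tendsto (fun t : ℝ => t + b) atTop atTop :=
          tendsto_atTop_add_const_right _ _ tendsto_id
        have h0 : Tendsto (fun t : ℝ => W b / (t + b)) atTop (𝓝 0) :=
          Tendsto.div_atTop tendsto_const_nhds ha
        have h1 : Tendsto (fun t : ℝ => b / (t + b)) atTop (𝓝 0) :=
          Tendsto.div_atTop tendsto_const_nhds ha
        have h2 : Tendsto (fun t : ℝ => W b / (t + b) - W (-t) / t * (1 - b / (t + b)))
            atTop (𝓝 (0 - Winf * (1 - 0))) :=
          Tendsto.sub h0 (Tendsto.mul hminus (Tendsto.const_sub _ h1))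
        simp only [sub_zero, mul_one, zero_sub] at h2
        refine h2.congr' ?_
        filter_upwards [eventually_ge_atTop (max 1 (-b+1))] with t ht
        have ht1 : (1:ℝ) ≤ t := le_trans (le_max_left _ _) ht
        have ht2 : -b + 1 ≤ t := le_trans (le_max_right _ _) ht
        have htne : t ≠ 0 := by linarith
        have htbne : t + b ≠ 0 := by intro h; nlinarith
        have h3 : -t - b ≠ 0 := by intro h; nlinarith
        field_simp
        ring
      refine le_of_tendsto hten ?_
      filter_upwards [eventually_ge_atTop (max (-a + 1) (-b + 1))] with t ht
      have ht1 : -a + 1 ≤ t := le_trans (le_max_left _ _) ht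
      have ht2 : -b + 1 ≤ t := le_trans (le_max_right _ _) ht
      exact hW.secant_mono (mem_univ b) (mem_univ (-t)) (mem_univ a)
        (by intro h; nlinarith) (by intro h; linarith) (by linarith)
    have hba : a - b < 0 := by linarith
    have hq : (W a - W b) / (a - b) * (a - b) = W a - W b :=
      div_mul_cancel₀ _ (by linarith)
    nlinarith [mul_le_mul_of_nonpos_right hlb (le_of_lt hba)]
  intro a b
  rcases lt_trichotomy a b with h | h | h
  · rw [abs_of_pos (by linarith : (0:ℝ) < b - a), abs_le]
    exact ⟨by nlinarith [key2 a b h], key a b h⟩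
  · simp [h]
  · rw [abs_of_neg (by linarith : b - a < 0), abs_le]
    exact ⟨by nlinarith [key b a h], by nlinarith [key2 b a h]⟩


theorem periodic_intervalIntegrable {f : ℝ → ℝ} (hper : Function.Periodic f 1)
    (hint : IntegrableOn f (Set.Icc 0 1)) (a b : ℝ) : IntervalIntegrable f volume a b := by
  have base : IntervalIntegrable f volume 0 1 :=
    (intervalIntegrable_iff_integrableOn_Ioc_of_le zero_le_one).mpr
      (hint.mono_set Ioc_subset_Icc_self)
  -- shifted unit intervals
  have shift : ∀ n : ℤ, IntervalIntegrable f volume (n : ℝ) ((n : ℝ) + 1) := by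
    intro n
    have h1 : IntervalIntegrable (fun x => f (x + (-n : ℝ))) volume (0 - (-n : ℝ)) (1 - (-n : ℝ)) :=
      base.comp_add_right _
    have h2 : (fun x => f (x + (-n : ℝ))) = f := by
      funext x
      have : x + (-n : ℝ) = x - (n : ℝ) * 1 := by push_cast; ring
      rw [this, hper.sub_int_mul_eq n]
    rw [h2] at h1
    have e1 : (0 : ℝ) - (-n : ℝ) = (n : ℝ) := by ring
    have e2 : (1 : ℝ) - (-n : ℝ) = (n : ℝ) + 1 := by ring
    rwa [e1, e2] at h1
  -- integrable on [-(N), N] for all N : ℕ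
  have big : ∀ N : ℕ, IntervalIntegrable f volume (-(N : ℝ)) (N : ℝ) := by
    intro N
    induction N with
    | zero => simp
    | succ n ih =>
      have l : IntervalIntegrable f volume (-(n : ℝ) - 1) (-(n : ℝ)) := by
        have h := shift (-(n : ℤ) - 1)
        have e3 : ((-(n : ℤ) - 1 : ℤ) : ℝ) = -(n:ℝ) - 1 := by push_cast; ring
        have e4 : ((-(n : ℤ) - 1 : ℤ) : ℝ) + 1 = -(n:ℝ) := by push_cast; ring
        rwa [e4, e3] at h
      have r : IntervalIntegrable f volume (n : ℝ) ((n : ℝ) + 1) := by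
        have h := shift (n : ℤ)
        have e3 : ((n : ℤ) : ℝ) = (n:ℝ) := by push_cast; ring
        rwa [e3] at h
      have h : IntervalIntegrable f volume (-(n : ℝ) - 1) ((n:ℝ) + 1) := (l.trans ih).trans r
      have e1 : (-((n+1 : ℕ) : ℝ)) = -(n:ℝ) - 1 := by push_cast; ring
      have e2 : (((n+1 : ℕ)) : ℝ) = (n:ℝ) + 1 := by push_cast; ring
      rwa [e1, e2]
  obtain ⟨N, hN⟩ := exists_nat_gt (max |a| |b|)
  refine (big N).mono_set ?_
  have ha := (abs_le.mp (le_of_lt (lt_of_le_of_lt (le_max_left |a| |b|) hN)))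
  have hb := (abs_le.mp (le_of_lt (lt_of_le_of_lt (le_max_right |a| |b|) hN)))
  rw [Set.uIcc_of_le (by simp : -(N:ℝ) ≤ N)]
  exact Set.uIcc_subset_Icc ⟨by linarith [ha.1], by linarith [ha.2]⟩
    ⟨by linarith [hb.1], by linarith [hb.2]⟩


/-- Fubini swap for `∫₀¹ G x * (∫₀ˣ F) dx`. -/
theorem fubini_primitive {F G : ℝ → ℝ}
    (hF : IntegrableOn F (Set.Ioc 0 1)) (hG : IntegrableOn G (Set.Ioc 0 1)) :
    ∫ x in Set.Ioc (0:ℝ) 1, G x * (∫ t in Set.Ioc (0:ℝ) x, F t) =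
      ∫ t in Set.Ioc (0:ℝ) 1, F t * (∫ x in Set.Ioc t 1, G x) := by
  set ρ : Measure ℝ := volume.restrict (Set.Ioc (0:ℝ) 1) with hρ
  have hmeas : MeasurableSet {p : ℝ × ℝ | p.2 ≤ p.1} :=
    measurableSet_le measurable_snd measurable_fst
  set K : ℝ × ℝ → ℝ := Set.indicator {p : ℝ × ℝ | p.2 ≤ p.1} (fun p => G p.1 * F p.2) with hK
  have hKint : Integrable K (ρ.prod ρ) := by
    refine (Integrable.mul_prod (L := ℝ) hG hF).indicator hmeas
  have hswap : ∫ x, ∫ y, K (x, y) ∂ρ ∂ρ = ∫ y, ∫ x, K (x, y) ∂ρ ∂ρ :=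
    integral_integral_swap (by exact hKint)
  have hL : ∀ x ∈ Set.Ioc (0:ℝ) 1, ∫ y, K (x, y) ∂ρ = G x * ∫ t in Set.Ioc (0:ℝ) x, F t := by
    intro x hx
    have : (fun y => K (x, y)) = Set.indicator (Set.Iic x) (fun y => G x * F y) := by
      funext y
      simp only [hK, Set.indicator, Set.mem_setOf_eq, Set.mem_Iic]
    rw [this, integral_indicator measurableSet_Iic, hρ,
      Measure.restrict_restrict measurableSet_Iic]
    have : Set.Iic x ∩ Set.Ioc 0 1 = Set.Ioc 0 x := by
      ext y; simp only [Set.mem_inter_iff, Set.mem_Iic, Set.mem_Ioc]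
      constructor
      · rintro ⟨h1, h2, h3⟩; exact ⟨h2, h1⟩
      · rintro ⟨h1, h2⟩; exact ⟨h2, h1, le_trans h2 hx.2⟩
    rw [this, integral_const_mul]
  have hR : ∀ y ∈ Set.Ioc (0:ℝ) 1, ∫ x, K (x, y) ∂ρ = F y * ∫ x in Set.Ioc y 1, G x := by
    intro y hy
    have : (fun x => K (x, y)) = Set.indicator (Set.Ici y) (fun x => G x * F y) := by
      funext x
      simp only [hK, Set.indicator, Set.mem_setOf_eq, Set.mem_Ici]
    rw [this, integral_indicator measurableSet_Ici, hρ,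
      Measure.restrict_restrict measurableSet_Ici]
    have : Set.Ici y ∩ Set.Ioc 0 1 = Set.Icc y 1 := by
      ext x; simp only [Set.mem_inter_iff, Set.mem_Ici, Set.mem_Icc, Set.mem_Ioc]
      constructor
      · rintro ⟨h1, _, h3⟩; exact ⟨h1, h3⟩
      · rintro ⟨h1, h2⟩; exact ⟨h1, lt_of_lt_of_le hy.1 h1, h2⟩
    rw [this, MeasureTheory.integral_Icc_eq_integral_Ioc]
    simp_rw [mul_comm (G _) (F y)]
    rw [integral_const_mul]
  calc ∫ x in Set.Ioc (0:ℝ) 1, G x * (∫ t in Set.Ioc (0:ℝ) x, F t)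
      = ∫ x, ∫ y, K (x, y) ∂ρ ∂ρ := by
        rw [hρ]
        refine setIntegral_congr_fun measurableSet_Ioc fun x hx => ?_
        rw [← hL x hx]
    _ = ∫ y, ∫ x, K (x, y) ∂ρ ∂ρ := hswap
    _ = ∫ t in Set.Ioc (0:ℝ) 1, F t * (∫ x in Set.Ioc t 1, G x) := by
        rw [hρ]
        refine setIntegral_congr_fun measurableSet_Ioc fun y hy => ?_
        rw [← hR y hy]



/-- Integration by parts on the circle, for primitives of integrable functions. -/
theorem parts_circle (F G f g : ℝ → ℝ)
    (hF : IntegrableOn F (Set.Icc 0 1)) (hG : IntegrableOn G (Set.Icc 0 1))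
    (hf : ∀ x ∈ Set.Icc (0:ℝ) 1, f x = f 0 + ∫ t in (0:ℝ)..x, F t)
    (hg : ∀ x ∈ Set.Icc (0:ℝ) 1, g x = g 0 + ∫ t in (0:ℝ)..x, G t) :
    (∫ x in Set.Ioc (0:ℝ) 1, f x * G x) + ∫ x in Set.Ioc (0:ℝ) 1, F x * g x
      = f 1 * g 1 - f 0 * g 0 := by
  have hF' : IntegrableOn F (Set.Ioc 0 1) := hF.mono_set Set.Ioc_subset_Icc_self
  have hG' : IntegrableOn G (Set.Ioc 0 1) := hG.mono_set Set.Ioc_subset_Icc_self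
  have hfi : ∀ x ∈ Set.Icc (0:ℝ) 1, f x = f 0 + ∫ t in Set.Ioc (0:ℝ) x, F t := by
    intro x hx; rw [hf x hx, intervalIntegral.integral_of_le hx.1]
  have hgi : ∀ x ∈ Set.Icc (0:ℝ) 1, g x = g 0 + ∫ t in Set.Ioc (0:ℝ) x, G t := by
    intro x hx; rw [hg x hx, intervalIntegral.integral_of_le hx.1]
  have hfc : ContinuousOn (fun x => ∫ t in Set.Ioc (0:ℝ) x, F t) (Set.Icc 0 1) :=
    intervalIntegral.continuousOn_primitive hF
  have hmeasF : AEStronglyMeasurable (fun x => ∫ t in Set.Ioc (0:ℝ) x, F t)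
      (volume.restrict (Set.Ioc 0 1)) :=
    (hfc.mono Set.Ioc_subset_Icc_self).aestronglyMeasurable measurableSet_Ioc
  -- integrability of  x ↦ G x * ∫₀ˣ F  on (0,1]
  have hGprim : Integrable (fun x => (∫ t in Set.Ioc (0:ℝ) x, F t) * G x)
      (volume.restrict (Set.Ioc 0 1)) := by
    refine Integrable.bdd_mul (c := ∫ t in Set.Ioc (0:ℝ) 1, ‖F t‖) hG' hmeasF ?_
    rw [ae_restrict_iff' measurableSet_Ioc]
    refine Eventually.of_forall fun x hx => ?_
    refine le_trans (norm_integral_le_integral_norm F) ?_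
    exact setIntegral_mono_set hF'.norm (Eventually.of_forall (fun t => norm_nonneg _))
      (HasSubset.Subset.eventuallyLE (Set.Ioc_subset_Ioc_right hx.2))
  -- f x * G x = f 0 * G x + (∫₀ˣ F) * G x  on (0,1]
  have step1 : ∫ x in Set.Ioc (0:ℝ) 1, f x * G x
      = f 0 * (∫ x in Set.Ioc (0:ℝ) 1, G x)
        + ∫ x in Set.Ioc (0:ℝ) 1, G x * (∫ t in Set.Ioc (0:ℝ) x, F t) := by
    rw [← integral_const_mul]
    have hGG : Integrable (fun x => f 0 * G x) (volume.restrict (Set.Ioc 0 1)) :=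
      hG'.const_mul _
    rw [← integral_add hGG (by simpa [mul_comm] using hGprim)]
    refine setIntegral_congr_fun measurableSet_Ioc fun x hx => ?_
    rw [hfi x (Set.mem_Icc_of_Ioc hx)]
    ring
  -- tail integral of G
  have tailG : ∀ t ∈ Set.Ioc (0:ℝ) 1, (∫ x in Set.Ioc t 1, G x) = g 1 - g t := by
    intro t ht
    have hsplit : Set.Ioc (0:ℝ) 1 = Set.Ioc 0 t ∪ Set.Ioc t 1 :=
      (Set.Ioc_union_Ioc_eq_Ioc (le_of_lt ht.1) ht.2).symm
    have hdisj : Disjoint (Set.Ioc (0:ℝ) t) (Set.Ioc t 1) := (Set.Ioc_disjoint_Ioc_of_le le_rfl)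
    have : (∫ x in Set.Ioc (0:ℝ) 1, G x)
        = (∫ x in Set.Ioc (0:ℝ) t, G x) + ∫ x in Set.Ioc t 1, G x := by
      rw [hsplit, setIntegral_union hdisj measurableSet_Ioc
        (hG'.mono_set (by rw [hsplit]; exact Set.subset_union_left))
        (hG'.mono_set (by rw [hsplit]; exact Set.subset_union_right))]
    have h1 := hgi 1 (by norm_num)
    have ht' := hgi t (Set.mem_Icc_of_Ioc ht)
    linarith [this]
  have step2 : ∫ t in Set.Ioc (0:ℝ) 1, F t * (∫ x in Set.Ioc t 1, G x)
      = g 1 * (∫ t in Set.Ioc (0:ℝ) 1, F t) - ∫ t in Set.Ioc (0:ℝ) 1, F t * g t := by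
    have hgc : ContinuousOn (fun x => ∫ t in Set.Ioc (0:ℝ) x, G t) (Set.Icc 0 1) :=
      intervalIntegral.continuousOn_primitive hG
    have hgm : AEStronglyMeasurable g (volume.restrict (Set.Ioc 0 1)) := by
      have : ContinuousOn g (Set.Icc 0 1) := by
        refine ContinuousOn.congr (by fun_prop (disch := exact hG)) hgi
      exact (this.mono Set.Ioc_subset_Icc_self).aestronglyMeasurable measurableSet_Ioc
    have hgb : ∃ C, ∀ x ∈ Set.Icc (0:ℝ) 1, ‖g x‖ ≤ C := by
      have hcont : ContinuousOn g (Set.Icc 0 1) :=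
        ContinuousOn.congr (by fun_prop (disch := exact hG)) hgi
      exact isCompact_Icc.exists_bound_of_continuousOn hcont
    obtain ⟨C, hC⟩ := hgb
    have hFg : Integrable (fun t => g t * F t) (volume.restrict (Set.Ioc 0 1)) := by
      refine Integrable.bdd_mul (c := C) hF' hgm ?_
      rw [ae_restrict_iff' measurableSet_Ioc]
      exact Eventually.of_forall fun x hx => hC x (Set.mem_Icc_of_Ioc hx)
    have hgF : Integrable (fun t => g 1 * F t) (volume.restrict (Set.Ioc 0 1)) :=
      hF'.const_mul _
    calc ∫ t in Set.Ioc (0:ℝ) 1, F t * (∫ x in Set.Ioc t 1, G x)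
        = ∫ t in Set.Ioc (0:ℝ) 1, (g 1 * F t - g t * F t) := by
          refine setIntegral_congr_fun measurableSet_Ioc fun t ht => ?_
          rw [tailG t ht]; ring
      _ = g 1 * (∫ t in Set.Ioc (0:ℝ) 1, F t) - ∫ t in Set.Ioc (0:ℝ) 1, F t * g t := by
          rw [integral_sub hgF hFg, integral_const_mul]
          congr 1
          refine setIntegral_congr_fun measurableSet_Ioc fun t ht => ?_
          ring
  have hG1 : (∫ x in Set.Ioc (0:ℝ) 1, G x) = g 1 - g 0 := by
    have := hgi 1 (by norm_num); linarith
  have hF1 : (∫ t in Set.Ioc (0:ℝ) 1, F t) = f 1 - f 0 := by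
    have := hfi 1 (by norm_num); linarith
  have hfb := fubini_primitive hF' hG'
  rw [step1, hfb, step2, hG1, hF1]
  ring


theorem abs_apply_le_totalVariation (ν : SignedMeasure ℝ) {E : Set ℝ} (hE : MeasurableSet E) :
    |ν E| ≤ (ν.totalVariation E).toReal := by
  conv_lhs => rw [← ν.toSignedMeasure_toJordanDecomposition]
  rw [MeasureTheory.JordanDecomposition.toSignedMeasure, MeasureTheory.VectorMeasure.sub_apply,
    Measure.toSignedMeasure_apply_measurable hE, Measure.toSignedMeasure_apply_measurable hE,
    MeasureTheory.SignedMeasure.totalVariation, Measure.add_apply,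
    ENNReal.toReal_add (measure_ne_top _ _) (measure_ne_top _ _)]
  have h1 : (0:ℝ) ≤ (ν.toJordanDecomposition.posPart E).toReal := ENNReal.toReal_nonneg
  have h2 : (0:ℝ) ≤ (ν.toJordanDecomposition.negPart E).toReal := ENNReal.toReal_nonneg
  rw [abs_sub_le_iff]; simp only [measureReal_def]; constructor <;> linarith

theorem avg_periodic_integral {φ : ℝ → ℝ} (hper : Function.Periodic φ 1)
    (hII : ∀ a b : ℝ, IntervalIntegrable φ volume a b) (ε : ℝ) :
    ∫ x in (0:ℝ)..1, (∫ t in x..x+ε, φ t) = ε * ∫ t in (0:ℝ)..1, φ t := by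
  set Ψ : ℝ → ℝ := fun x => ∫ t in (0:ℝ)..x, φ t with hΨ
  have hcont : Continuous Ψ := intervalIntegral.continuous_primitive hII 0
  have hkey : ∀ x : ℝ, (∫ t in x..x+ε, φ t) = Ψ (x+ε) - Ψ x := by
    intro x
    have := intervalIntegral.integral_add_adjacent_intervals (hII 0 x) (hII x (x+ε))
    simp only [hΨ]; linarith
  have hΨII : ∀ a b : ℝ, IntervalIntegrable Ψ volume a b := fun a b =>
    hcont.intervalIntegrable a b
  have hkey1 : ∀ x : ℝ, (∫ t in x..x+1, φ t) = Ψ (x+1) - Ψ x := by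
    intro x
    have := intervalIntegral.integral_add_adjacent_intervals (hII 0 x) (hII x (x+1))
    simp only [hΨ]; linarith
  have hΨεII : ∀ a b : ℝ, IntervalIntegrable (fun x => Ψ (x + ε)) volume a b := fun a b =>
    (hcont.comp (continuous_id.add continuous_const)).intervalIntegrable a b
  calc ∫ x in (0:ℝ)..1, (∫ t in x..x+ε, φ t) = ∫ x in (0:ℝ)..1, (Ψ (x+ε) - Ψ x) := by
        simp_rw [hkey]
    _ = (∫ x in (0:ℝ)..1, Ψ (x+ε)) - ∫ x in (0:ℝ)..1, Ψ x :=
        intervalIntegral.integral_sub (hΨεII 0 1) (hΨII 0 1)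
    _ = (∫ x in ε..(1+ε), Ψ x) - ∫ x in (0:ℝ)..1, Ψ x := by
        rw [intervalIntegral.integral_comp_add_right]; ring_nf
    _ = (∫ x in (1:ℝ)..(1+ε), Ψ x) - ∫ x in (0:ℝ)..ε, Ψ x := by
        have h1 := intervalIntegral.integral_add_adjacent_intervals (hΨII ε 1) (hΨII 1 (1+ε))
        have h2 := intervalIntegral.integral_add_adjacent_intervals (hΨII 0 ε) (hΨII ε 1)
        linarith
    _ = (∫ s in (0:ℝ)..ε, Ψ (s+1)) - ∫ s in (0:ℝ)..ε, Ψ s := by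
        rw [intervalIntegral.integral_comp_add_right]; ring_nf
    _ = ∫ s in (0:ℝ)..ε, (Ψ (s+1) - Ψ s) :=
        (intervalIntegral.integral_sub ((hcont.comp (continuous_id.add continuous_const)).intervalIntegrable 0 ε) (hΨII 0 ε)).symm
    _ = ∫ s in (0:ℝ)..ε, (∫ t in (0:ℝ)..1, φ t) := by
        refine intervalIntegral.integral_congr fun s _ => ?_
        have h2 := hper.intervalIntegral_add_eq s 0
        simp only [zero_add] at h2
        have h3 := hkey1 s
        linarith
    _ = ε * ∫ t in (0:ℝ)..1, φ t := by
        rw [intervalIntegral.integral_const, smul_eq_mul, sub_zero]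

theorem singular_D1_monotone {G : ℝ → ℝ} (hmono : Monotone G) (hGnn : ∀ t, 0 ≤ G t) (ε : ℝ) :
    Monotone (fun x => if x + ε ≤ 1 then G (x+ε) else G (x+ε-1) + G 1) := by
  intro a b hab
  by_cases ha : a + ε ≤ 1 <;> by_cases hb : b + ε ≤ 1 <;> simp only [ha, hb, if_true, if_false,
    if_pos, if_neg, not_false_iff]
  · exact hmono (by linarith)
  · have h1 : G (a + ε) ≤ G 1 := hmono (by linarith)
    have h2 : 0 ≤ G (b + ε - 1) := hGnn _
    linarith
  · linarith
  · have : G (a + ε - 1) ≤ G (b + ε - 1) := hmono (by linarith)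
    linarith

theorem singular_avg_integral {G : ℝ → ℝ} (hmono : Monotone G) (hGnn : ∀ t, 0 ≤ G t)
    {ε : ℝ} (hε0 : 0 < ε) (hε : ε < 1/2) :
    ∫ x in (0:ℝ)..1, ((if x + ε ≤ 1 then G (x+ε) else G (x+ε-1) + G 1) - G x)
      = ε * G 1 := by
  set D1 : ℝ → ℝ := fun x => if x + ε ≤ 1 then G (x+ε) else G (x+ε-1) + G 1 with hD1
  have hD1mono : Monotone D1 := singular_D1_monotone hmono hGnn ε
  have hD1II : ∀ a b : ℝ, IntervalIntegrable D1 volume a b := fun a b =>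
    hD1mono.intervalIntegrable
  have hGII : ∀ a b : ℝ, IntervalIntegrable G volume a b := fun a b => hmono.intervalIntegrable
  have split : (∫ x in (0:ℝ)..1, D1 x)
      = (∫ x in (0:ℝ)..(1-ε), D1 x) + ∫ x in (1-ε)..1, D1 x :=
    (intervalIntegral.integral_add_adjacent_intervals (hD1II _ _) (hD1II _ _)).symm
  have part1 : (∫ x in (0:ℝ)..(1-ε), D1 x) = ∫ x in ε..1, G x := by
    have : ∀ x ∈ Set.uIcc (0:ℝ) (1-ε), D1 x = G (x + ε) := by
      intro x hx
      rw [Set.uIcc_of_le (by linarith)] at hx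
      simp only [hD1, if_pos (by linarith [hx.2] : x + ε ≤ 1)]
    rw [intervalIntegral.integral_congr this, intervalIntegral.integral_comp_add_right]
    ring_nf
  have part2 : (∫ x in (1-ε)..1, D1 x) = (∫ x in (0:ℝ)..ε, G x) + ε * G 1 := by
    have hae : ∀ᵐ x ∂volume, x ∈ Set.uIoc (1-ε) 1 → D1 x = G (x + (ε - 1)) + G 1 := by
      rw [Set.uIoc_of_le (by linarith)]
      refine Eventually.of_forall fun x hx => ?_
      simp only [hD1, if_neg (by push_neg; linarith [hx.1] : ¬ x + ε ≤ 1)]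
      ring_nf
    calc (∫ x in (1-ε)..1, D1 x) = ∫ x in (1-ε)..1, (G (x + (ε - 1)) + G 1) := by
          refine intervalIntegral.integral_congr_ae ?_
          simpa using hae
      _ = (∫ x in (1-ε)..1, G (x + (ε - 1))) + ∫ x in (1-ε)..1, (G 1 : ℝ) := by
          refine intervalIntegral.integral_add ?_ (intervalIntegrable_const)
          exact (hmono.comp (fun a b hab => by simp; linarith : Monotone (fun x : ℝ => x + (ε - 1)))).intervalIntegrable
      _ = (∫ x in (0:ℝ)..ε, G x) + ε * G 1 := by
          rw [intervalIntegral.integral_comp_add_right, intervalIntegral.integral_const,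
            smul_eq_mul]
          ring_nf
  have hGsplit : (∫ x in (0:ℝ)..1, G x)
      = (∫ x in (0:ℝ)..ε, G x) + ∫ x in ε..1, G x :=
    (intervalIntegral.integral_add_adjacent_intervals (hGII _ _) (hGII _ _)).symm
  calc ∫ x in (0:ℝ)..1, ((if x + ε ≤ 1 then G (x+ε) else G (x+ε-1) + G 1) - G x)
      = (∫ x in (0:ℝ)..1, D1 x) - ∫ x in (0:ℝ)..1, G x :=
        intervalIntegral.integral_sub (hD1II 0 1) (hGII 0 1)
    _ = ε * G 1 := by rw [split, part1, part2, hGsplit]; ring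

theorem jensen_avg {W : ℝ → ℝ} (hWconv : ConvexOn ℝ Set.univ W) (hWcont : Continuous W)
    {f : ℝ → ℝ} {x ε : ℝ} (hε : 0 < ε) (hf : IntegrableOn f (Set.Ioc x (x+ε)))
    (hWf : IntegrableOn (fun t => W (f t)) (Set.Ioc x (x+ε))) :
    W (ε⁻¹ * ∫ t in x..x+ε, f t) ≤ ε⁻¹ * ∫ t in x..x+ε, W (f t) := by
  set ρ : Measure ℝ := volume.restrict (Set.Ioc x (x+ε)) with hρ
  have huniv : ρ Set.univ = ENNReal.ofReal ε := by
    rw [hρ, Measure.restrict_apply_univ, Real.volume_Ioc]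
    congr 1; ring
  haveI : IsFiniteMeasure ρ := ⟨by rw [huniv]; exact ENNReal.ofReal_lt_top⟩
  haveI : NeZero ρ := ⟨by
    intro h
    have := huniv
    rw [h] at this
    simp only [Measure.coe_zero, Pi.zero_apply] at this
    rw [eq_comm, ENNReal.ofReal_eq_zero] at this
    linarith⟩
  have hj := hWconv.map_average_le hWcont.continuousOn isClosed_univ
    (Eventually.of_forall fun t => Set.mem_univ (f t)) hf hWf
  rw [average_eq, average_eq, measureReal_def, ← hρ, huniv, ENNReal.toReal_ofReal hε.le, smul_eq_mul, smul_eq_mul] at hj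
  rw [intervalIntegral.integral_of_le (by linarith), intervalIntegral.integral_of_le (by linarith)]
  exact hj

end Helpers

/-- `w ∈ W^{1,1}(𝕋)`: `w` is a 1-periodic primitive of a 1-periodic integrable
function `wx` (its weak derivative). -/
def IsW11Per (w wx : ℝ → ℝ) : Prop :=
  Function.Periodic w 1 ∧ Function.Periodic wx 1 ∧
    IntegrableOn wx (Set.Icc 0 1) ∧
    ∀ x : ℝ, w x = w 0 + ∫ t in (0:ℝ)..x, wx t

/-- If `ξ ∈ W^{1,2}(𝕋)` takes values in `[-W^∞, W^∞]` and satisfies the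
subgradient inequality for the energy `∫ W(w_x)` against all `w ∈ W^{1,1}(𝕋)`,
then `-ξ_x` belongs to the subdifferential of the relaxed energy
`Ē(w) = ∫ W(w_x) + W^∞ |D^s w|(𝕋)` at `u`: for every BV function `w`, written
via the Lebesgue decomposition `Dw = w_x·L¹ + D^s w` of its derivative measure,
one has `Ē(w) - Ē(u) ≥ -∫ ξ_x (w - u)`. -/
theorem neg_xi_x_in_relaxed_subdifferential
    (W : ℝ → ℝ) (hWconv : ConvexOn ℝ Set.univ W)
    (Winf : ℝ)
    (hWplus : Tendsto (fun t : ℝ => W t / t) atTop (𝓝 Winf))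
    (hWminus : Tendsto (fun t : ℝ => W (-t) / t) atTop (𝓝 Winf))
    (u ux : ℝ → ℝ) (hu : IsW11Per u ux)
    (ξ ξx : ℝ → ℝ) (hξper : Function.Periodic ξ 1)
    (hξbd : ∀ x, ξ x ∈ Set.Icc (-Winf) Winf)
    (hξL2 : MemLp ξx 2 (volume.restrict (Set.Icc (0:ℝ) 1)))
    (hξprim : ∀ x : ℝ, ξ x = ξ 0 + ∫ t in (0:ℝ)..x, ξx t)
    (hineq : ∀ w wx : ℝ → ℝ, IsW11Per w wx →
      (∫ x in Set.Icc (0:ℝ) 1, ξ x * (wx x - ux x)) ≤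
        (∫ x in Set.Icc (0:ℝ) 1, W (wx x)) - ∫ x in Set.Icc (0:ℝ) 1, W (ux x)) :
    -- conclusion: for every `w ∈ BV(𝕋)` with `Dw = wx·L¹ + νs`, `νs ⟂ L¹`,
    ∀ (w wx : ℝ → ℝ) (νs : SignedMeasure ℝ),
      Function.Periodic w 1 → IntegrableOn wx (Set.Icc 0 1) →
      νs.totalVariation ⟂ₘ volume →
      (∀ x ∈ Set.Icc (0:ℝ) 1, w x = w 0 + (∫ t in (0:ℝ)..x, wx t) + νs (Set.Ioc 0 x)) →
      IntegrableOn w (Set.Icc 0 1) →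
      ((∫ x in Set.Icc (0:ℝ) 1, W (wx x)) + Winf * (νs.totalVariation (Set.Icc 0 1)).toReal)
          - (∫ x in Set.Icc (0:ℝ) 1, W (ux x)) ≥
        -∫ x in Set.Icc (0:ℝ) 1, ξx x * (w x - u x) := by
  intro w wx νs hwper hwxint hsing hwrep hwint
  obtain ⟨huper, huxper, huxint, huprim⟩ := hu
  haveI hfin01 : IsFiniteMeasure (volume.restrict (Set.Icc (0:ℝ) 1)) :=
    ⟨by rw [Measure.restrict_apply_univ, Real.volume_Icc]; norm_num⟩
  -- basic facts about W
  have Winf0 : 0 ≤ Winf := by have h := hξbd 0; simp only [Set.mem_Icc] at h; linarith [h.1, h.2]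
  have lip : ∀ a b : ℝ, |W b - W a| ≤ Winf * |b - a| :=
    lipschitz_of_recession W hWconv Winf hWplus hWminus
  have hWcont : Continuous W := by
    have : LipschitzWith ⟨Winf, Winf0⟩ W := by
      refine LipschitzWith.of_dist_le_mul fun a b => ?_
      rw [Real.dist_eq, Real.dist_eq]
      show _ ≤ Winf * _
      exact (by simpa [abs_sub_comm] using lip b a)
    exact this.continuous
  -- total variation measure and its CDF
  set μ : Measure ℝ := νs.totalVariation with hμdef
  haveI hμfin : IsFiniteMeasure μ := by
    rw [hμdef]; unfold MeasureTheory.SignedMeasure.totalVariation; infer_instance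
  have habs : ∀ E : Set ℝ, MeasurableSet E → |νs E| ≤ (μ E).toReal := fun E hE =>
    abs_apply_le_totalVariation νs hE
  set G : ℝ → ℝ := fun t => (μ (Set.Ioc 0 t)).toReal with hGdef
  have hGmono : Monotone G := fun a b hab =>
    ENNReal.toReal_mono (measure_ne_top _ _) (measure_mono (Set.Ioc_subset_Ioc_right hab))
  have hGnn : ∀ t, 0 ≤ G t := fun t => ENNReal.toReal_nonneg
  have hGadd : ∀ a b : ℝ, 0 ≤ a → a ≤ b → G b - G a = (μ (Set.Ioc a b)).toReal := by
    intro a b ha hab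
    have hsplit : μ (Set.Ioc 0 b) = μ (Set.Ioc 0 a) + μ (Set.Ioc a b) := by
      rw [← Set.Ioc_union_Ioc_eq_Ioc ha hab]
      exact measure_union (Set.Ioc_disjoint_Ioc_of_le le_rfl) measurableSet_Ioc
    simp only [hGdef]
    rw [hsplit, ENNReal.toReal_add (measure_ne_top _ _) (measure_ne_top _ _)]
    ring
  have hνadd : ∀ a b : ℝ, 0 ≤ a → a ≤ b → νs (Set.Ioc 0 b)
      = νs (Set.Ioc 0 a) + νs (Set.Ioc a b) := by
    intro a b ha hab
    rw [← Set.Ioc_union_Ioc_eq_Ioc ha hab]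
    exact MeasureTheory.VectorMeasure.of_union (Set.Ioc_disjoint_Ioc_of_le le_rfl)
      measurableSet_Ioc measurableSet_Ioc
  -- periodization of wx
  set wxp : ℝ → ℝ := fun t => wx (Int.fract t) with hwxpdef
  have hwxp_per : Function.Periodic wxp 1 := by
    intro x
    simp only [hwxpdef]
    rw [show x + 1 = x + ((1:ℤ):ℝ) by norm_num, Int.fract_add_intCast]
  have hae01 : wx =ᵐ[volume.restrict (Set.Icc (0:ℝ) 1)] wxp := by
    rw [Filter.EventuallyEq, ae_iff, Measure.restrict_apply' measurableSet_Icc]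
    refine measure_mono_null ?_ ((measure_singleton (1:ℝ)))
    rintro t ⟨hne, ht0, ht1⟩
    simp only [Set.mem_singleton_iff]
    by_contra h1
    exact hne (by simp only [hwxpdef]; rw [Int.fract_eq_self.mpr ⟨ht0, lt_of_le_of_ne ht1 h1⟩])
  have hwxpint : IntegrableOn wxp (Set.Icc 0 1) := hwxint.congr hae01
  have hwxpII : ∀ a b : ℝ, IntervalIntegrable wxp volume a b := fun a b =>
    periodic_intervalIntegrable hwxp_per hwxpint a b
  have hprim_eq : ∀ t ∈ Set.Icc (0:ℝ) 1, (∫ s in (0:ℝ)..t, wxp s) = ∫ s in (0:ℝ)..t, wx s := by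
    intro t ht
    refine intervalIntegral.integral_congr_ae ?_
    have hsub : {s : ℝ | ¬ (s ∈ Set.uIoc (0:ℝ) t → wxp s = wx s)} ⊆ {1} := by
      intro s hs
      simp only [Set.mem_setOf_eq, Classical.not_imp] at hs
      obtain ⟨hmem, hne⟩ := hs
      rw [Set.uIoc_of_le ht.1] at hmem
      by_contra h1
      refine hne ?_
      simp only [hwxpdef]
      rw [Int.fract_eq_self.mpr ⟨le_of_lt hmem.1, lt_of_le_of_ne (le_trans hmem.2 ht.2) h1⟩]
    rw [ae_iff]
    exact measure_mono_null hsub ((measure_singleton (1:ℝ)))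
  -- the function φ = W ∘ wxp
  set φ : ℝ → ℝ := fun t => W (wxp t) with hφdef
  have hφper : Function.Periodic φ 1 := fun x => by simp only [hφdef, hwxp_per x]
  have hWlin : ∀ y : ℝ, |W y| ≤ Winf * |y| + |W 0| := by
    intro y
    have h := lip 0 y
    have h2 := abs_sub_abs_le_abs_sub (W y) (W 0)
    rw [sub_zero] at h
    linarith
  have hφint : IntegrableOn φ (Set.Icc 0 1) := by
    have hm : AEStronglyMeasurable φ (volume.restrict (Set.Icc (0:ℝ) 1)) :=
      hWcont.comp_aestronglyMeasurable hwxpint.aestronglyMeasurable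
    refine Integrable.mono' ((hwxpint.abs.const_mul Winf).add (integrable_const |W 0|)) hm ?_
    exact Filter.Eventually.of_forall fun t => by
      simpa [Real.norm_eq_abs] using hWlin (wxp t)
  have hφII : ∀ a b : ℝ, IntervalIntegrable φ volume a b := fun a b =>
    periodic_intervalIntegrable hφper hφint a b
  -- the singular primitive part of w
  set hh : ℝ → ℝ := fun t => w t - w 0 - ∫ s in (0:ℝ)..t, wxp s with hhdef
  have hh01 : ∀ t ∈ Set.Icc (0:ℝ) 1, hh t = νs (Set.Ioc 0 t) := by
    intro t ht
    simp only [hhdef]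
    rw [hprim_eq t ht, hwrep t ht]
    ring
  have hhshift : ∀ t : ℝ, hh (t+1) = hh t - ∫ s in (0:ℝ)..1, wxp s := by
    intro t
    simp only [hhdef]
    have h1 : w (t+1) = w t := hwper t
    have h2 := intervalIntegral.integral_add_adjacent_intervals (hwxpII 0 t) (hwxpII t (t+1))
    have h3 := hwxp_per.intervalIntegral_add_eq t 0
    simp only [zero_add] at h3
    rw [h1]
    linarith
  -- global bound on w
  have hwII : ∀ a b : ℝ, IntervalIntegrable w volume a b := fun a b =>
    periodic_intervalIntegrable hwper hwint a b
  obtain ⟨M, hM0, hwbd⟩ : ∃ M : ℝ, 0 ≤ M ∧ ∀ t : ℝ, |w t| ≤ M := by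
    set M : ℝ := |w 0| + (∫ s in Set.Ioc (0:ℝ) 1, |wx s|) + (μ (Set.Ioc 0 1)).toReal with hMdef
    have habsint : (0:ℝ) ≤ ∫ s in Set.Ioc (0:ℝ) 1, |wx s| :=
      integral_nonneg fun s => abs_nonneg _
    have hM0 : 0 ≤ M := by positivity
    refine ⟨M, hM0, fun t => ?_⟩
    -- reduce to [0,1] by periodicity
    have hfract : w t = w (Int.fract t) := by
      have := hwper.sub_int_mul_eq (x := t) ⌊t⌋
      simp only [mul_one] at this
      rw [← this]
      rfl
    rw [hfract]
    have hmem : Int.fract t ∈ Set.Icc (0:ℝ) 1 :=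
      ⟨Int.fract_nonneg t, le_of_lt (Int.fract_lt_one t)⟩
    set y := Int.fract t
    rw [hwrep y hmem]
    have h1 : |∫ s in (0:ℝ)..y, wx s| ≤ ∫ s in Set.Ioc (0:ℝ) 1, |wx s| := by
      rw [intervalIntegral.integral_of_le hmem.1]
      refine le_trans (norm_integral_le_integral_norm wx) ?_
      refine setIntegral_mono_set ((hwxint.mono_set Set.Ioc_subset_Icc_self).norm)
        (Filter.Eventually.of_forall fun s => norm_nonneg _) ?_
      exact HasSubset.Subset.eventuallyLE (Set.Ioc_subset_Ioc_right hmem.2)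
    have h2 : |νs (Set.Ioc 0 y)| ≤ (μ (Set.Ioc 0 1)).toReal := by
      refine le_trans (habs _ measurableSet_Ioc) ?_
      exact ENNReal.toReal_mono (measure_ne_top _ _)
        (measure_mono (Set.Ioc_subset_Ioc_right hmem.2))
    calc |w 0 + (∫ s in (0:ℝ)..y, wx s) + νs (Set.Ioc 0 y)|
        ≤ |w 0| + |∫ s in (0:ℝ)..y, wx s| + |νs (Set.Ioc 0 y)| := abs_add_three _ _ _
      _ ≤ M := by rw [hMdef]; linarith
  -- facts about u and ξ
  have huxII : ∀ a b : ℝ, IntervalIntegrable ux volume a b := fun a b =>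
    periodic_intervalIntegrable huxper huxint a b
  have hucont : Continuous u := by
    have : Continuous (fun x : ℝ => u 0 + ∫ t in (0:ℝ)..x, ux t) :=
      continuous_const.add (intervalIntegral.continuous_primitive huxII 0)
    exact this.congr fun x => (huprim x).symm
  have hξxint : IntegrableOn ξx (Set.Icc 0 1) := by
    exact hξL2.integrable (by norm_num)
  have hξcont01 : ContinuousOn ξ (Set.Icc 0 1) := by
    have hc : ContinuousOn (fun x : ℝ => ξ 0 + ∫ t in Set.Ioc (0:ℝ) x, ξx t) (Set.Icc 0 1) :=
      continuousOn_const.add (intervalIntegral.continuousOn_primitive hξxint)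
    refine ContinuousOn.congr hc fun x hx => ?_
    rw [hξprim x, intervalIntegral.integral_of_le hx.1]
  have hξabs : ∀ x, |ξ x| ≤ Winf := fun x => abs_le.mpr ⟨(hξbd x).1, (hξbd x).2⟩
  have hξm : AEStronglyMeasurable ξ (volume.restrict (Set.Icc (0:ℝ) 1)) :=
    hξcont01.aestronglyMeasurable measurableSet_Icc
  -- ===== KEY ε-INEQUALITY =====
  have key : ∀ ε : ℝ, 0 < ε → ε < 1/2 →
      -(∫ x in Set.Ioc (0:ℝ) 1, ξx x * (ε⁻¹ * ∫ t in x..x+ε, w t))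
        - (∫ x in Set.Ioc (0:ℝ) 1, ξ x * ux x)
      ≤ (∫ x in Set.Icc (0:ℝ) 1, W (wx x)) + Winf * G 1
        - ∫ x in Set.Icc (0:ℝ) 1, W (ux x) := by
    intro ε hε0 hε12
    have hεne : ε ≠ 0 := ne_of_gt hε0
    set wt : ℝ → ℝ := fun x => ε⁻¹ * ∫ t in x..x+ε, w t with hwtdef
    set d : ℝ → ℝ := fun x => ε⁻¹ * (w (x+ε) - w x) with hddef
    have hIIshift : ∀ a b : ℝ, IntervalIntegrable (fun s => w (s+ε)) volume a b := by
      intro a b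
      have h := (hwII (a+ε) (b+ε)).comp_add_right ε
      rw [show a+ε-ε = a by ring, show b+ε-ε = b by ring] at h
      exact h
    -- periodicity of the mollification and its derivative
    have hwt_per : Function.Periodic wt 1 := by
      intro x
      simp only [hwtdef]
      congr 1
      have h1 : (∫ t in x..x+ε, w (t+1)) = ∫ t in (x+1)..(x+ε+1), w t :=
        intervalIntegral.integral_comp_add_right w 1
      have h2 : (∫ t in x..x+ε, w (t+1)) = ∫ t in x..x+ε, w t :=
        intervalIntegral.integral_congr fun t _ => hwper t
      rw [show x+1+ε = x+ε+1 by ring, ← h1, h2]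
    have hd_per : Function.Periodic d 1 := by
      intro x
      simp only [hddef]
      rw [show x+1+ε = (x+ε)+1 by ring, hwper (x+ε), hwper x]
    -- integrability of d
    have hdintIoc : IntegrableOn d (Set.Ioc 0 1) := by
      have h2 : IntegrableOn (fun x => w (x+ε)) (Set.Ioc 0 1) :=
        (intervalIntegrable_iff_integrableOn_Ioc_of_le zero_le_one).mp (hIIshift 0 1)
      have h3 : IntegrableOn w (Set.Ioc 0 1) := hwint.mono_set Set.Ioc_subset_Icc_self
      exact (h2.sub h3).const_mul ε⁻¹
    have hdint : IntegrableOn d (Set.Icc 0 1) :=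
      (integrableOn_Icc_iff_integrableOn_Ioc).mpr hdintIoc
    -- primitive identity
    have hwt_prim : ∀ x : ℝ, wt x = wt 0 + ∫ t in (0:ℝ)..x, d t := by
      intro x
      have hsub : (∫ t in (0:ℝ)..x, d t)
          = ε⁻¹ * ((∫ t in (0:ℝ)..x, w (t+ε)) - ∫ t in (0:ℝ)..x, w t) := by
        simp only [hddef]
        rw [intervalIntegral.integral_const_mul,
          intervalIntegral.integral_sub (hIIshift 0 x) (hwII 0 x)]
      have h1 : (∫ t in (0:ℝ)..x, w (t+ε)) = ∫ t in ε..(x+ε), w t := by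
        have := intervalIntegral.integral_comp_add_right (a := (0:ℝ)) (b := x) w ε
        rwa [zero_add] at this
      have h2 := intervalIntegral.integral_add_adjacent_intervals (hwII 0 ε) (hwII ε (x+ε))
      have h3 := intervalIntegral.integral_add_adjacent_intervals (hwII 0 x) (hwII x (x+ε))
      simp only [hwtdef]
      rw [hsub, h1, zero_add]
      have : (∫ t in x..x+ε, w t) = (∫ t in (0:ℝ)..ε, w t)
          + ((∫ t in ε..(x+ε), w t) - ∫ t in (0:ℝ)..x, w t) := by linarith
      rw [this]
      ring
    have hW11 : IsW11Per wt d := ⟨hwt_per, hd_per, hdint, hwt_prim⟩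
    have hkey := hineq wt d hW11
    -- integrability of products with ξ
    have hξd_int : Integrable (fun x => ξ x * d x) (volume.restrict (Set.Icc (0:ℝ) 1)) := by
      refine Integrable.bdd_mul (c := Winf) hdint hξm ?_
      exact Filter.Eventually.of_forall fun x => by
        simpa [Real.norm_eq_abs] using hξabs x
    have hξux_int : Integrable (fun x => ξ x * ux x) (volume.restrict (Set.Icc (0:ℝ) 1)) := by
      refine Integrable.bdd_mul (c := Winf) huxint hξm ?_
      exact Filter.Eventually.of_forall fun x => by
        simpa [Real.norm_eq_abs] using hξabs x
    have hsplit1 : (∫ x in Set.Icc (0:ℝ) 1, ξ x * (d x - ux x))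
        = (∫ x in Set.Icc (0:ℝ) 1, ξ x * d x) - ∫ x in Set.Icc (0:ℝ) 1, ξ x * ux x := by
      rw [← integral_sub hξd_int hξux_int]
      refine integral_congr_ae (Filter.Eventually.of_forall fun x => ?_)
      ring
    -- integration by parts: ∫ ξ d = - ∫ ξx wt
    have hparts_wt : (∫ x in Set.Ioc (0:ℝ) 1, ξ x * d x)
        = -(∫ x in Set.Ioc (0:ℝ) 1, ξx x * wt x) := by
      have hp := parts_circle ξx d ξ wt hξxint hdint (fun x _ => hξprim x)
        (fun x _ => hwt_prim x)
      have hξ10 : ξ 1 = ξ 0 := by have := hξper 0; simpa using this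
      have hwt10 : wt 1 = wt 0 := by have := hwt_per 0; simpa using this
      rw [hξ10, hwt10] at hp
      linarith
    -- ==== Jensen/Lipschitz bound on ∫ W(d) ====
    set D1 : ℝ → ℝ := fun x => if x + ε ≤ 1 then G (x+ε) else G (x+ε-1) + G 1 with hD1def
    have hD1mono : Monotone D1 := singular_D1_monotone hGmono hGnn ε
    have hΔ : ∀ x ∈ Set.Icc (0:ℝ) 1, |hh (x+ε) - hh x| ≤ D1 x - G x := by
      intro x hx
      by_cases hcase : x + ε ≤ 1
      · simp only [hD1def, if_pos hcase]
        have h1 : hh (x+ε) = νs (Set.Ioc 0 (x+ε)) := hh01 _ ⟨by linarith [hx.1], hcase⟩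
        have h2 : hh x = νs (Set.Ioc 0 x) := hh01 x hx
        have h3 := hνadd x (x+ε) hx.1 (by linarith)
        have h4 : hh (x+ε) - hh x = νs (Set.Ioc x (x+ε)) := by rw [h1, h2]; linarith
        rw [h4, show G (x+ε) - G x = (μ (Set.Ioc x (x+ε))).toReal from
          hGadd x (x+ε) hx.1 (by linarith)]
        exact habs _ measurableSet_Ioc
      · push_neg at hcase
        simp only [hD1def, if_neg (not_le.mpr hcase)]
        have hh0 : hh 0 = 0 := by simp [hhdef]
        have hc : hh 1 = -(∫ s in (0:ℝ)..1, wxp s) := by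
          have := hhshift 0
          rw [zero_add] at this
          rw [this, hh0]
          ring
        have h4 : hh (x+ε) = hh (x+ε-1) + hh 1 := by
          have h5 := hhshift (x+ε-1)
          rw [show x+ε-1+1 = x+ε by ring] at h5
          rw [h5, hc]
          ring
        have hmem1 : x+ε-1 ∈ Set.Icc (0:ℝ) 1 := ⟨by linarith, by linarith [hx.2]⟩
        have h5 : hh (x+ε-1) = νs (Set.Ioc 0 (x+ε-1)) := hh01 _ hmem1
        have h6 : hh 1 = νs (Set.Ioc 0 1) := hh01 1 ⟨zero_le_one, le_refl 1⟩
        have h7 : hh x = νs (Set.Ioc 0 x) := hh01 x hx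
        have h8 := hνadd x 1 hx.1 hx.2
        have h9 : hh (x+ε) - hh x = νs (Set.Ioc 0 (x+ε-1)) + νs (Set.Ioc x 1) := by
          rw [h4, h5, h6, h7]; linarith
        rw [h9]
        have h10 : G 1 - G x = (μ (Set.Ioc x 1)).toReal := hGadd x 1 hx.1 hx.2
        calc |νs (Set.Ioc 0 (x+ε-1)) + νs (Set.Ioc x 1)|
            ≤ |νs (Set.Ioc 0 (x+ε-1))| + |νs (Set.Ioc x 1)| := abs_add_le _ _
          _ ≤ (μ (Set.Ioc 0 (x+ε-1))).toReal + (μ (Set.Ioc x 1)).toReal :=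
              add_le_add (habs _ measurableSet_Ioc) (habs _ measurableSet_Ioc)
          _ = G (x+ε-1) + G 1 - G x := by
              simp only [hGdef]
              linarith [h10]
    -- pointwise Jensen + Lipschitz
    have hpt : ∀ x ∈ Set.Icc (0:ℝ) 1, W (d x)
        ≤ ε⁻¹ * (∫ t in x..x+ε, φ t) + Winf * (ε⁻¹ * (D1 x - G x)) := by
      intro x hx
      have h3 := intervalIntegral.integral_add_adjacent_intervals (hwxpII 0 x)
        (hwxpII x (x+ε))
      have hw' : w (x+ε) - w x = (∫ t in x..x+ε, wxp t) + (hh (x+ε) - hh x) := by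
        simp only [hhdef]
        linarith
      have hdecomp : d x = ε⁻¹ * (∫ t in x..x+ε, wxp t) + ε⁻¹ * (hh (x+ε) - hh x) := by
        simp only [hddef]
        rw [hw']
        ring
      have hjx : W (ε⁻¹ * ∫ t in x..x+ε, wxp t) ≤ ε⁻¹ * ∫ t in x..x+ε, φ t := by
        refine jensen_avg hWconv hWcont hε0 ?_ ?_
        · exact (intervalIntegrable_iff_integrableOn_Ioc_of_le (by linarith)).mp
            (hwxpII x (x+ε))
        · exact (intervalIntegrable_iff_integrableOn_Ioc_of_le (by linarith)).mp
            (hφII x (x+ε))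
      have hlipx : |W (d x) - W (ε⁻¹ * ∫ t in x..x+ε, wxp t)| ≤ Winf * (ε⁻¹ * (D1 x - G x)) := by
        refine le_trans (lip _ _) ?_
        rw [hdecomp, show ε⁻¹ * (∫ t in x..x+ε, wxp t) + ε⁻¹ * (hh (x+ε) - hh x)
          - ε⁻¹ * (∫ t in x..x+ε, wxp t) = ε⁻¹ * (hh (x+ε) - hh x) by ring]
        rw [abs_mul, abs_inv, abs_of_pos hε0]
        refine mul_le_mul_of_nonneg_left ?_ Winf0
        exact mul_le_mul_of_nonneg_left (hΔ x hx) (by positivity)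
      have habs2 := (abs_le.mp hlipx).2
      linarith
    -- integrability of both sides of hpt
    have hWd_int : IntegrableOn (fun x => W (d x)) (Set.Icc 0 1) := by
      have hm : AEStronglyMeasurable (fun x => W (d x)) (volume.restrict (Set.Icc (0:ℝ) 1)) :=
        hWcont.comp_aestronglyMeasurable hdint.aestronglyMeasurable
      refine Integrable.mono' ((hdint.abs.const_mul Winf).add (integrable_const |W 0|)) hm ?_
      exact Filter.Eventually.of_forall fun t => by
        simpa [Real.norm_eq_abs] using hWlin (d t)
    have havgφ_cont : Continuous (fun x : ℝ => ∫ t in x..x+ε, φ t) := by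
      have hΨφ : Continuous (fun y : ℝ => ∫ t in (0:ℝ)..y, φ t) :=
        intervalIntegral.continuous_primitive hφII 0
      have h1 : Continuous (fun x : ℝ => (∫ t in (0:ℝ)..(x+ε), φ t) - ∫ t in (0:ℝ)..x, φ t) :=
        (hΨφ.comp (continuous_id.add continuous_const)).sub hΨφ
      refine h1.congr fun x => ?_
      have := intervalIntegral.integral_add_adjacent_intervals (hφII 0 x) (hφII x (x+ε))
      linarith
    have hDG_II : IntervalIntegrable (fun x => D1 x - G x) volume 0 1 :=
      (hD1mono.intervalIntegrable).sub (hGmono.intervalIntegrable)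
    have hDG_int : IntegrableOn (fun x => D1 x - G x) (Set.Icc 0 1) :=
      (integrableOn_Icc_iff_integrableOn_Ioc).mpr
        ((intervalIntegrable_iff_integrableOn_Ioc_of_le zero_le_one).mp hDG_II)
    have hRHS_int : IntegrableOn
        (fun x => ε⁻¹ * (∫ t in x..x+ε, φ t) + Winf * (ε⁻¹ * (D1 x - G x)))
        (Set.Icc 0 1) := by
      refine Integrable.add ?_ ?_
      · exact ((continuous_const.mul havgφ_cont : Continuous fun x => ε⁻¹ * ∫ t in x..x+ε, φ t).integrableOn_Icc)
      · have : (fun x => Winf * (ε⁻¹ * (D1 x - G x)))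
            = fun x => (Winf * ε⁻¹) * (D1 x - G x) := by funext x; ring
        rw [this]
        exact hDG_int.const_mul _
    -- integrate the pointwise bound
    have hint_mono := setIntegral_mono_on hWd_int hRHS_int measurableSet_Icc hpt
    -- compute the RHS integral
    have hterm1 : (∫ x in Set.Icc (0:ℝ) 1, ε⁻¹ * (∫ t in x..x+ε, φ t))
        = ∫ x in Set.Icc (0:ℝ) 1, W (wx x) := by
      rw [integral_const_mul, MeasureTheory.integral_Icc_eq_integral_Ioc,
        ← intervalIntegral.integral_of_le zero_le_one, avg_periodic_integral hφper hφII ε]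
      rw [← mul_assoc, inv_mul_cancel₀ hεne, one_mul]
      rw [intervalIntegral.integral_of_le zero_le_one,
        MeasureTheory.integral_Icc_eq_integral_Ioc]
      refine integral_congr_ae ?_
      have hae' : wx =ᵐ[volume.restrict (Set.Ioc (0:ℝ) 1)] wxp :=
        hae01.filter_mono (ae_mono (Measure.restrict_mono Set.Ioc_subset_Icc_self le_rfl))
      filter_upwards [hae'] with t ht
      simp only [hφdef, ht]
    have hterm2 : (∫ x in Set.Icc (0:ℝ) 1, Winf * (ε⁻¹ * (D1 x - G x))) = Winf * G 1 := by
      have h1 : (∫ x in Set.Icc (0:ℝ) 1, (D1 x - G x)) = ε * G 1 := by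
        rw [MeasureTheory.integral_Icc_eq_integral_Ioc,
          ← intervalIntegral.integral_of_le zero_le_one]
        exact singular_avg_integral hGmono hGnn hε0 hε12
      have h2 : (fun x => Winf * (ε⁻¹ * (D1 x - G x)))
          = fun x => (Winf * ε⁻¹) * (D1 x - G x) := by funext x; ring
      rw [h2, integral_const_mul, h1]
      field_simp
    have hjen : (∫ x in Set.Icc (0:ℝ) 1, W (d x))
        ≤ (∫ x in Set.Icc (0:ℝ) 1, W (wx x)) + Winf * G 1 := by
      refine le_trans hint_mono ?_
      rw [integral_add (f := fun x => ε⁻¹ * ∫ t in x..x+ε, φ t) (g := fun x => Winf * (ε⁻¹ * (D1 x - G x))) ((continuous_const.mul havgφ_cont : Continuous fun x => ε⁻¹ * ∫ t in x..x+ε, φ t).integrableOn_Icc) (by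
        have : (fun x => Winf * (ε⁻¹ * (D1 x - G x)))
            = fun x => (Winf * ε⁻¹) * (D1 x - G x) := by funext x; ring
        rw [this]
        exact hDG_int.const_mul _), hterm1, hterm2]
    -- ==== assemble ====
    have hIccIoc1 : (∫ x in Set.Icc (0:ℝ) 1, ξ x * d x) = ∫ x in Set.Ioc (0:ℝ) 1, ξ x * d x :=
      MeasureTheory.integral_Icc_eq_integral_Ioc
    have hIccIoc2 : (∫ x in Set.Icc (0:ℝ) 1, ξ x * ux x)
        = ∫ x in Set.Ioc (0:ℝ) 1, ξ x * ux x :=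
      MeasureTheory.integral_Icc_eq_integral_Ioc
    rw [hsplit1, hIccIoc1, hIccIoc2, hparts_wt] at hkey
    simp only [hwtdef] at hkey
    linarith
  -- ===== LIMIT ε → 0⁺ =====
  have hΨw_cont : Continuous (fun y : ℝ => ∫ t in (0:ℝ)..y, w t) :=
    intervalIntegral.continuous_primitive hwII 0
  have hΨp_cont : Continuous (fun y : ℝ => ∫ t in (0:ℝ)..y, wxp t) :=
    intervalIntegral.continuous_primitive hwxpII 0
  -- right-continuity of the average at interior points
  have hrc : ∀ x ∈ Set.Ioo (0:ℝ) 1,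
      Tendsto (fun ε : ℝ => ε⁻¹ * ∫ t in x..x+ε, w t) (𝓝[>] (0:ℝ)) (𝓝 (w x)) := by
    intro x hx
    rw [Metric.tendsto_nhdsWithin_nhds]
    intro δ hδ
    -- small total variation just to the right of x
    have hshrink : Tendsto (fun n : ℕ => μ (Set.Ioc x (x + 1/(n+1)))) atTop
        (𝓝 (μ (⋂ n : ℕ, Set.Ioc x (x + 1/(n+1))))) := by
      refine tendsto_measure_iInter_atTop (fun n => measurableSet_Ioc.nullMeasurableSet)
        (fun m n hmn => Set.Ioc_subset_Ioc_right ?_) ⟨0, measure_ne_top _ _⟩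
      have h1 : (0:ℝ) < m + 1 := by positivity
      have h2 : (m:ℝ) + 1 ≤ (n:ℝ) + 1 := by exact_mod_cast by omega
      have := one_div_le_one_div_of_le h1 h2
      linarith
    have hempty : (⋂ n : ℕ, Set.Ioc x (x + 1/(n+1))) = ∅ := by
      refine Set.eq_empty_iff_forall_notMem.mpr fun t ht => ?_
      rw [Set.mem_iInter] at ht
      have hxt : x < t := (ht 0).1
      obtain ⟨n, hn⟩ := exists_nat_one_div_lt (show (0:ℝ) < t - x by linarith)
      have h2 : t ≤ x + 1/(n+1) := by
        have := (ht n).2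
        push_cast at this ⊢
        linarith
      linarith
    rw [hempty] at hshrink
    simp only [measure_empty] at hshrink
    have hev : ∀ᶠ n : ℕ in atTop, μ (Set.Ioc x (x + 1/(n+1))) < ENNReal.ofReal (δ/4) :=
      hshrink.eventually_lt_const (by simp [ENNReal.ofReal_pos]; linarith)
    obtain ⟨n₀, hn₀⟩ := hev.exists
    -- continuity of the absolutely continuous primitive at x
    have hcontx := Metric.continuous_iff.mp hΨp_cont x (δ/4) (by linarith)
    obtain ⟨η₂, hη₂0, hη₂⟩ := hcontx
    set η : ℝ := min (min (1/(n₀+1)) η₂) (1 - x) with hηdef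
    have hη0 : 0 < η := by
      refine lt_min (lt_min (by positivity) hη₂0) (by linarith [hx.2])
    refine ⟨η, hη0, fun {ε} hεpos hεd => ?_⟩
    have hε0 : 0 < ε := Set.mem_Ioi.mp hεpos
    rw [Real.dist_eq, sub_zero, abs_of_pos hε0] at hεd
    -- the pointwise bound on [x, x+ε]
    have hbd : ∀ t ∈ Set.Ioc x (x+ε), |w t - w x| ≤ δ/2 := by
      intro t ht
      have htx : x < t := ht.1
      have htε : t ≤ x + ε := ht.2
      have ht1 : t ≤ 1 := by
        have : η ≤ 1 - x := min_le_right _ _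
        linarith
      have htIcc : t ∈ Set.Icc (0:ℝ) 1 := ⟨by linarith [hx.1], ht1⟩
      have hxIcc : x ∈ Set.Icc (0:ℝ) 1 := ⟨le_of_lt hx.1, le_of_lt hx.2⟩
      -- decompose
      have hwt : w t - w x = ((∫ s in (0:ℝ)..t, wxp s) - ∫ s in (0:ℝ)..x, wxp s)
          + (hh t - hh x) := by
        simp only [hhdef]; ring
      have hpart1 : |(∫ s in (0:ℝ)..t, wxp s) - ∫ s in (0:ℝ)..x, wxp s| < δ/4 := by
        have hdist : dist t x < η₂ := by
          rw [Real.dist_eq, abs_of_pos (show (0:ℝ) < t - x by linarith)]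
          have h1 : η ≤ η₂ := le_trans (min_le_left _ _) (min_le_right _ _)
          linarith
        have := hη₂ t hdist
        rwa [Real.dist_eq] at this
      have hpart2 : |hh t - hh x| < δ/4 := by
        have hνst : hh t - hh x = νs (Set.Ioc x t) := by
          rw [hh01 t htIcc, hh01 x hxIcc]
          have := hνadd x t (le_of_lt hx.1) (le_of_lt htx)
          linarith
        rw [hνst]
        refine lt_of_le_of_lt (habs _ measurableSet_Ioc) ?_
        have hsub : μ (Set.Ioc x t) ≤ μ (Set.Ioc x (x + 1/(n₀+1))) := by
          refine measure_mono (Set.Ioc_subset_Ioc_right ?_)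
          have h1 : η ≤ 1/(n₀+1) := le_trans (min_le_left _ _) (min_le_left _ _)
          linarith
        have hlt : μ (Set.Ioc x t) < ENNReal.ofReal (δ/4) := lt_of_le_of_lt hsub hn₀
        have := (ENNReal.toReal_lt_toReal (measure_ne_top _ _) ENNReal.ofReal_ne_top).mpr hlt
        rwa [ENNReal.toReal_ofReal (by linarith)] at this
      rw [hwt]
      calc |((∫ s in (0:ℝ)..t, wxp s) - ∫ s in (0:ℝ)..x, wxp s) + (hh t - hh x)|
          ≤ |(∫ s in (0:ℝ)..t, wxp s) - ∫ s in (0:ℝ)..x, wxp s| + |hh t - hh x| := abs_add_le _ _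
        _ ≤ δ/2 := by linarith
    -- average bound
    have hid : (ε⁻¹ * ∫ t in x..x+ε, w t) - w x = ε⁻¹ * ∫ t in x..x+ε, (w t - w x) := by
      rw [intervalIntegral.integral_sub (hwII x (x+ε)) intervalIntegrable_const,
        intervalIntegral.integral_const]
      simp only [add_sub_cancel_left, smul_eq_mul]
      field_simp
    rw [Real.dist_eq, hid]
    have hnorm : ‖∫ t in x..x+ε, (w t - w x)‖ ≤ (δ/2) * |(x+ε) - x| := by
      refine intervalIntegral.norm_integral_le_of_norm_le_const fun t ht => ?_
      rw [Set.uIoc_of_le (by linarith)] at ht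
      simpa [Real.norm_eq_abs] using hbd t ht
    rw [abs_mul, abs_inv, abs_of_pos hε0]
    have : |∫ t in x..x+ε, (w t - w x)| ≤ (δ/2) * ε := by
      simpa [abs_of_pos hε0, Real.norm_eq_abs] using hnorm
    calc ε⁻¹ * |∫ t in x..x+ε, (w t - w x)| ≤ ε⁻¹ * ((δ/2) * ε) := by
          exact mul_le_mul_of_nonneg_left this (by positivity)
      _ = δ/2 := by field_simp
      _ < δ := by linarith
  -- dominated convergence
  have hlim : Tendsto (fun ε : ℝ => ∫ x in Set.Ioc (0:ℝ) 1, ξx x * (ε⁻¹ * ∫ t in x..x+ε, w t))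
      (𝓝[>] (0:ℝ)) (𝓝 (∫ x in Set.Ioc (0:ℝ) 1, ξx x * w x)) := by
    have hξxint'' : IntegrableOn ξx (Set.Ioc 0 1) := hξxint.mono_set Set.Ioc_subset_Icc_self
    refine tendsto_integral_filter_of_dominated_convergence (fun x => |ξx x| * M) ?_ ?_ ?_ ?_
    · filter_upwards [self_mem_nhdsWithin] with ε hε
      have hcont : Continuous (fun x : ℝ => ε⁻¹ * ∫ t in x..x+ε, w t) := by
        have h1 : Continuous (fun x : ℝ => (∫ t in (0:ℝ)..(x+ε), w t) - ∫ t in (0:ℝ)..x, w t) :=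
          (hΨw_cont.comp (continuous_id.add continuous_const)).sub hΨw_cont
        have h2 : (fun x : ℝ => ∫ t in x..x+ε, w t)
            = fun x : ℝ => (∫ t in (0:ℝ)..(x+ε), w t) - ∫ t in (0:ℝ)..x, w t := by
          funext x
          have := intervalIntegral.integral_add_adjacent_intervals (hwII 0 x) (hwII x (x+ε))
          linarith
        exact continuous_const.mul (h2 ▸ h1)
      exact hξxint''.aestronglyMeasurable.mul hcont.aestronglyMeasurable
    · filter_upwards [self_mem_nhdsWithin] with ε hε
      refine Filter.Eventually.of_forall fun x => ?_
      have hε0 : 0 < ε := Set.mem_Ioi.mp hε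
      have havg : |ε⁻¹ * ∫ t in x..x+ε, w t| ≤ M := by
        rw [abs_mul, abs_inv, abs_of_pos hε0]
        have h1 : ‖∫ t in x..x+ε, w t‖ ≤ M * |(x+ε) - x| :=
          intervalIntegral.norm_integral_le_of_norm_le_const fun t _ => by
            simpa [Real.norm_eq_abs] using hwbd t
        rw [Real.norm_eq_abs] at h1
        simp only [add_sub_cancel_left] at h1
        rw [abs_of_pos hε0] at h1
        calc ε⁻¹ * |∫ t in x..x+ε, w t| ≤ ε⁻¹ * (M * ε) :=
              mul_le_mul_of_nonneg_left h1 (by positivity)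
          _ = M := by field_simp
      rw [Real.norm_eq_abs, abs_mul]
      exact mul_le_mul_of_nonneg_left havg (abs_nonneg _)
    · exact hξxint''.abs.mul_const M
    · have hae1 : ∀ᵐ x ∂(volume.restrict (Set.Ioc (0:ℝ) 1)), x ≠ 1 := by
        rw [ae_iff, Measure.restrict_apply' measurableSet_Ioc]
        refine measure_mono_null ?_ (measure_singleton (1:ℝ))
        intro t ⟨ht1, _⟩
        simpa using ht1
      filter_upwards [hae1, ae_restrict_mem measurableSet_Ioc] with x hx1 hxmem
      exact Tendsto.const_mul _ (hrc x ⟨hxmem.1, lt_of_le_of_ne hxmem.2 hx1⟩)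
  -- conclude
  have hfinal : -(∫ x in Set.Ioc (0:ℝ) 1, ξx x * w x) - (∫ x in Set.Ioc (0:ℝ) 1, ξ x * ux x)
      ≤ (∫ x in Set.Icc (0:ℝ) 1, W (wx x)) + Winf * G 1
        - ∫ x in Set.Icc (0:ℝ) 1, W (ux x) := by
    refine le_of_tendsto (Tendsto.sub_const (Tendsto.neg hlim) _) ?_
    filter_upwards [Ioo_mem_nhdsGT (by norm_num : (0:ℝ) < 1/2)] with ε hε
    exact key ε hε.1 hε.2
  -- integration by parts for u:  ∫ ξx u = - ∫ ξ ux
  have hparts_u : (∫ x in Set.Ioc (0:ℝ) 1, ξx x * u x)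
      = -(∫ x in Set.Ioc (0:ℝ) 1, ξ x * ux x) := by
    have hp := parts_circle ξx ux ξ u hξxint huxint (fun x _ => hξprim x) (fun x _ => huprim x)
    have hξ10 : ξ 1 = ξ 0 := by have := hξper 0; simpa using this
    have hu10 : u 1 = u 0 := by have := huper 0; simpa using this
    rw [hξ10, hu10] at hp
    linarith
  -- split the goal integral
  have hξxint' : IntegrableOn ξx (Set.Ioc 0 1) := hξxint.mono_set Set.Ioc_subset_Icc_self
  have hwm : AEStronglyMeasurable w (volume.restrict (Set.Ioc (0:ℝ) 1)) :=
    (hwint.mono_set Set.Ioc_subset_Icc_self).aestronglyMeasurable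
  have hxw_int : Integrable (fun x => w x * ξx x) (volume.restrict (Set.Ioc (0:ℝ) 1)) := by
    refine Integrable.bdd_mul (c := M) hξxint' hwm ?_
    exact Filter.Eventually.of_forall fun x => by simpa [Real.norm_eq_abs] using hwbd x
  have hxu_int : Integrable (fun x => u x * ξx x) (volume.restrict (Set.Ioc (0:ℝ) 1)) := by
    obtain ⟨Cu, hCu⟩ := isCompact_Icc.exists_bound_of_continuousOn
      (hucont.continuousOn : ContinuousOn u (Set.Icc (0:ℝ) 1))
    refine Integrable.bdd_mul (c := Cu) hξxint' hucont.aestronglyMeasurable ?_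
    rw [ae_restrict_iff' measurableSet_Ioc]
    exact Filter.Eventually.of_forall fun x hx => hCu x (Set.mem_Icc_of_Ioc hx)
  have hsplitgoal : (∫ x in Set.Icc (0:ℝ) 1, ξx x * (w x - u x))
      = (∫ x in Set.Ioc (0:ℝ) 1, ξx x * w x) - ∫ x in Set.Ioc (0:ℝ) 1, ξx x * u x := by
    rw [MeasureTheory.integral_Icc_eq_integral_Ioc]
    have : ∀ x, ξx x * (w x - u x) = w x * ξx x - u x * ξx x := fun x => by ring
    simp_rw [this]
    rw [integral_sub hxw_int hxu_int]
    congr 1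
    · exact integral_congr_ae (Filter.Eventually.of_forall fun x => by ring)
    · exact integral_congr_ae (Filter.Eventually.of_forall fun x => by ring)
  -- compare G 1 with total variation over Icc
  have hGIcc : Winf * G 1 ≤ Winf * (μ (Set.Icc 0 1)).toReal := by
    refine mul_le_mul_of_nonneg_left ?_ Winf0
    exact ENNReal.toReal_mono (measure_ne_top _ _)
      (measure_mono Set.Ioc_subset_Icc_self)
  rw [ge_iff_le, hsplitgoal]
  have := hparts_u
  linarith [hfinal, hGIcc]
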